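/- Let n ≥ 2, let c be an n-cycle and c' an (n−1)-cycle in the symmetric group 𝔖_n (i.e., c' has one fixed point and one cycle of length n−1), let ω be a primitive n-th root of unity and ω' a primitive (n−1)-st root of unity in ℂ. Then for all integers i and j, S_n(ω^{−i}, (ω')^{−j}) = |{w ∈ 𝔖_n : c^i w = w (c')^j}|, where S_n(t,q) = Σ_{w ∈ 𝔖_n} t^{maj(w)} q^{maj(w^{−1})}. -/

import Mathlib

noncomputable section

/-- The major index of a permutation w of {0,…,n−1} (1-based positions): the sum of the
positions p+1 ∈ {1,…,n−1} such that w(p) > w(p+1). -/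
def permMaj {n : ℕ} (w : Equiv.Perm (Fin n)) : ℕ :=
  ∑ p : Fin n, if h : (p : ℕ) + 1 < n then
    (if w ⟨(p : ℕ) + 1, h⟩ < w p then (p : ℕ) + 1 else 0) else 0

/-- The bimahonian distribution Sₙ(t,q) = Σ_{w ∈ 𝔖ₙ} t^{maj(w)} q^{maj(w⁻¹)}, here as a
function of complex arguments t, q. -/
def Sval (n : ℕ) (t q : ℂ) : ℂ :=
  ∑ w : Equiv.Perm (Fin n), t ^ permMaj w * q ^ permMaj w⁻¹

def wMaj (L : ℕ) (v : ℕ → ℕ) : ℕ :=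
  ∑ p ∈ Finset.range (L-1), if v (p+1) < v p then p+1 else 0
def pword {n : ℕ} (w : Equiv.Perm (Fin n)) : ℕ → ℕ :=
  fun p => if h : p < n then (w ⟨p,h⟩ : ℕ) else 0

lemma permMaj_eq_wMaj {n : ℕ} (w : Equiv.Perm (Fin n)) : permMaj w = wMaj n (pword w) := by
  have h1 : permMaj w = ∑ p ∈ Finset.range n,
      (if h : p + 1 < n then (if pword w (p+1) < pword w p then p+1 else 0) else 0) := by
    rw [permMaj, ← Fin.sum_univ_eq_sum_range]
    apply Finset.sum_congr rfl
    intro p _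
    by_cases h : (p : ℕ) + 1 < n
    · rw [dif_pos h, dif_pos h]
      have e1 : pword w ((p:ℕ)+1) = (w ⟨(p:ℕ)+1, h⟩ : ℕ) := dif_pos h
      have e2 : pword w (p:ℕ) = (w p : ℕ) := by
        rw [pword, dif_pos p.isLt]
      rw [e1, e2]; simp only [Fin.lt_iff_val_lt_val]
    · rw [dif_neg h, dif_neg h]
  rw [h1, wMaj]
  rw [← Finset.sum_subset (Finset.range_subset_range.2 (Nat.sub_le n 1))
    (fun x hx hx' => by
      simp only [Finset.mem_range] at hx hx'
      rw [dif_neg (by omega)])]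
  apply Finset.sum_congr rfl
  intro p hp
  simp only [Finset.mem_range] at hp
  rw [dif_pos (by omega)]
def wIns (g M : ℕ) (v : ℕ → ℕ) : ℕ → ℕ :=
  fun p => if p < g then v p else if p = g then M else v (p-1)
def eA (v : ℕ → ℕ) (m g : ℕ) : ℕ :=
  ∑ q ∈ Finset.Ico g (m-1), if v (q+1) < v q then 1 else 0


lemma wMaj_congr {L : ℕ} {v v' : ℕ → ℕ} (h : ∀ p < L, v p = v' p) : wMaj L v = wMaj L v' := by
  unfold wMaj
  apply Finset.sum_congr rfl
  intro p hp
  simp only [Finset.mem_range] at hp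
  rw [h p (by omega), h (p+1) (by omega)]

lemma wMaj_wIns_last (m M : ℕ) (v : ℕ → ℕ) (hv : ∀ p < m, v p < M) :
    wMaj (m+1) (wIns m M v) = wMaj m v := by
  rw [wMaj, wMaj, Nat.add_sub_cancel]
  have h1 : ∀ p ∈ Finset.range m, (if wIns m M v (p+1) < wIns m M v p then p+1 else 0)
      = if p + 1 < m then (if v (p+1) < v p then p+1 else 0) else 0 := by
    intro p hp
    simp only [Finset.mem_range] at hp
    by_cases h : p + 1 < m
    · rw [if_pos h]
      simp only [wIns, if_pos h, if_pos hp]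
    · rw [if_neg h]
      have hp1 : p + 1 = m := by omega
      simp only [wIns, if_pos hp, if_neg (by omega : ¬ p + 1 < m), if_pos hp1]
      rw [if_neg (by exact not_lt.2 (le_of_lt (hv p hp)))]
  rw [Finset.sum_congr rfl h1]
  have h2 : ∀ p : ℕ, (p + 1 < m ↔ p ∈ Finset.range (m-1)) := by
    intro p; simp only [Finset.mem_range]; omega
  calc ∑ p ∈ Finset.range m, (if p + 1 < m then (if v (p+1) < v p then p+1 else 0) else 0)
      = ∑ p ∈ Finset.range m, (if p ∈ Finset.range (m-1) then (if v (p+1) < v p then p+1 else 0) else 0) := by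
        apply Finset.sum_congr rfl; intro p _; rw [if_congr (h2 p) rfl rfl]
    _ = ∑ p ∈ Finset.range m ∩ Finset.range (m-1), (if v (p+1) < v p then p+1 else 0) :=
        Finset.sum_ite_mem _ _ _
    _ = ∑ p ∈ Finset.range (m-1), (if v (p+1) < v p then p+1 else 0) := by
        congr 1; ext x; simp only [Finset.mem_inter, Finset.mem_range]; omega

lemma wMaj_wIns (m M g : ℕ) (v : ℕ → ℕ) (hg : g < m) (hv : ∀ p < m, v p < M) :
    wMaj (m+1) (wIns g M v) + (if 1 ≤ g ∧ v g < v (g-1) then g else 0)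
      = wMaj m v + (g+1) + eA v m g := by
  set h : ℕ → ℕ := fun p => if v (p+1) < v p then p+1 else 0 with hh
  have key : ∀ p ∈ Finset.range m, (if wIns g M v (p+1) < wIns g M v p then p+1 else 0)
      = (if p + 1 < g then h p else 0) + (if g = p then p+1 else 0)
        + (if g < p then (if v p < v (p-1) then p+1 else 0) else 0) := by
    intro p hp
    simp only [Finset.mem_range] at hp
    rcases Nat.lt_trichotomy (p+1) g with hcase | hcase | hcase
    · have h1 : wIns g M v (p+1) = v (p+1) := if_pos hcase
      have h2 : wIns g M v p = v p := if_pos (by omega)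
      rw [h1, h2, if_pos hcase, if_neg (show ¬ g = p by omega), if_neg (show ¬ g < p by omega)]
      simp [hh]
    · have h1 : wIns g M v (p+1) = M := by
        rw [wIns, if_neg (by omega), if_pos hcase]
      have h2 : wIns g M v p = v p := if_pos (by omega)
      rw [h1, h2, if_neg (not_lt.2 (le_of_lt (hv p hp))), if_neg (show ¬ p + 1 < g by omega),
        if_neg (show ¬ g = p by omega), if_neg (show ¬ g < p by omega)]
    · rcases Nat.lt_or_ge p g with hpg | hpg
      · omega
      rcases Nat.eq_or_lt_of_le hpg with hpg2 | hpg2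
      · have h1 : wIns g M v (p+1) = v p := by
          rw [wIns, if_neg (by omega), if_neg (by omega)]; simp
        have h2 : wIns g M v p = M := by
          rw [wIns, if_neg (by omega), if_pos hpg2.symm]
        rw [h1, h2, if_pos (hv p hp)]
        simp [hpg2]
      · have h1 : wIns g M v (p+1) = v p := by
          rw [wIns, if_neg (by omega), if_neg (by omega)]; simp
        have h2 : wIns g M v p = v (p-1) := by
          rw [wIns, if_neg (by omega), if_neg (by omega)]
        rw [h1, h2, if_neg (show ¬ p + 1 < g by omega), if_neg (show ¬ g = p by omega),
          if_pos hpg2]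
        simp [show ¬ g = p by omega]
  have lhs1 : wMaj (m+1) (wIns g M v) =
      (∑ p ∈ Finset.range m, (if p + 1 < g then h p else 0))
      + (∑ p ∈ Finset.range m, (if g = p then p+1 else 0))
      + (∑ p ∈ Finset.range m, (if g < p then (if v p < v (p-1) then p+1 else 0) else 0)) := by
    rw [wMaj, Nat.add_sub_cancel, Finset.sum_congr rfl key, Finset.sum_add_distrib,
      Finset.sum_add_distrib]
  have S1 : (∑ p ∈ Finset.range m, (if p + 1 < g then h p else 0))
      = ∑ p ∈ Finset.range (g-1), h p := by
    calc (∑ p ∈ Finset.range m, (if p + 1 < g then h p else 0))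
        = ∑ p ∈ Finset.range m, (if p ∈ Finset.range (g-1) then h p else 0) := by
          apply Finset.sum_congr rfl; intro p _
          exact if_congr (by simp only [Finset.mem_range]; omega) rfl rfl
      _ = ∑ p ∈ Finset.range m ∩ Finset.range (g-1), h p := Finset.sum_ite_mem _ _ _
      _ = ∑ p ∈ Finset.range (g-1), h p := by
          congr 1; ext x; simp only [Finset.mem_inter, Finset.mem_range]; omega
  have S2 : (∑ p ∈ Finset.range m, (if g = p then p+1 else 0)) = g + 1 := by
    rw [Finset.sum_ite_eq, if_pos (Finset.mem_range.2 hg)]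
  have S3 : (∑ p ∈ Finset.range m, (if g < p then (if v p < v (p-1) then p+1 else 0) else 0))
      = (∑ q ∈ Finset.Ico g (m-1), h q) + eA v m g := by
    calc (∑ p ∈ Finset.range m, (if g < p then (if v p < v (p-1) then p+1 else 0) else 0))
        = ∑ p ∈ (Finset.range m).filter (fun p => g < p), (if v p < v (p-1) then p+1 else 0) := by
          rw [Finset.sum_filter]
      _ = ∑ p ∈ Finset.Ico (g+1) m, (if v p < v (p-1) then p+1 else 0) := by
          congr 1; ext x
          simp only [Finset.mem_filter, Finset.mem_range, Finset.mem_Ico]; omega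
      _ = ∑ q ∈ Finset.range (m - (g+1)), (if v (g+1+q) < v (g+1+q-1) then g+1+q+1 else 0) :=
          Finset.sum_Ico_eq_sum_range _ _ _
      _ = ∑ q ∈ Finset.range (m-1-g), (h (g+q) + (if v (g+q+1) < v (g+q) then 1 else 0)) := by
          rw [show m - (g+1) = m-1-g by omega]
          apply Finset.sum_congr rfl; intro q _
          have e1 : g+1+q-1 = g+q := by omega
          have e2 : g+1+q = g+q+1 := by omega
          rw [e1, e2, hh]
          simp only
          by_cases hd : v (g+q+1) < v (g+q)
          · rw [if_pos hd, if_pos hd, if_pos hd]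
          · rw [if_neg hd, if_neg hd, if_neg hd]
      _ = (∑ q ∈ Finset.Ico g (m-1), h q) + eA v m g := by
          rw [eA, Finset.sum_Ico_eq_sum_range, Finset.sum_Ico_eq_sum_range,
            ← Finset.sum_add_distrib]
  have RHS : wMaj m v = (∑ p ∈ Finset.range (g-1), h p)
      + (if 1 ≤ g ∧ v g < v (g-1) then g else 0) + ∑ q ∈ Finset.Ico g (m-1), h q := by
    rcases Nat.eq_zero_or_pos g with hg0 | hg0
    · subst hg0
      simp only [Nat.le_zero, wMaj]
      rw [Finset.range_eq_Ico]
      simp [hh]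
    · have hX : (if 1 ≤ g ∧ v g < v (g-1) then g else 0) = h (g-1) := by
        rw [hh]; simp only
        rw [show g - 1 + 1 = g by omega]
        by_cases hd : v g < v (g-1)
        · rw [if_pos ⟨hg0, hd⟩, if_pos hd]
        · rw [if_neg (by tauto), if_neg hd]
      rw [hX, wMaj, Finset.range_eq_Ico,
        ← Finset.sum_Ico_consecutive h (by omega : 0 ≤ g - 1) (by omega : g - 1 ≤ m - 1),
        Finset.sum_eq_sum_Ico_succ_bot (by omega : g - 1 < m - 1) h,
        show g - 1 + 1 = g by omega, ← Finset.range_eq_Ico]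
      ring
  rw [lhs1, S1, S2, S3, RHS]
  ring

def Fm (v : ℕ → ℕ) (m g : ℕ) : ℕ :=
  if g = m then m+1 else if 1 ≤ g ∧ v g < v (g-1) then 1 + eA v m g else g + 1 + eA v m g

lemma eA_le (v : ℕ → ℕ) (m g : ℕ) : eA v m g ≤ m - 1 - g := by
  calc eA v m g ≤ ∑ q ∈ Finset.Ico g (m-1), 1 := by
        apply Finset.sum_le_sum; intro q _; split <;> omega
    _ = m - 1 - g := by rw [Finset.sum_const, smul_eq_mul, mul_one, Nat.card_Ico]

lemma eA_split (v : ℕ → ℕ) (m g1 g2 : ℕ) (h1 : g1 ≤ g2) (h2 : g2 ≤ m - 1) :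
    eA v m g1 = (∑ q ∈ Finset.Ico g1 g2, if v (q+1) < v q then 1 else 0) + eA v m g2 := by
  rw [eA, eA, Finset.sum_Ico_consecutive _ h1 h2]

lemma Fm_pos (v : ℕ → ℕ) (m g : ℕ) : 1 ≤ Fm v m g := by
  rw [Fm]; split
  · omega
  · split <;> omega

lemma Fm_le (v : ℕ → ℕ) (m g : ℕ) (hg : g ≤ m) : Fm v m g ≤ m + 1 := by
  have := eA_le v m g
  rw [Fm]; split
  · omega
  · split <;> omega

lemma Fm_le' (v : ℕ → ℕ) (m g : ℕ) (hg : g < m) : Fm v m g ≤ m := by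
  have := eA_le v m g
  rw [Fm, if_neg (by omega)]
  split
  · omega
  · omega

lemma Fm_inj (v : ℕ → ℕ) (m g1 g2 : ℕ) (h12 : g1 < g2) (h2 : g2 ≤ m) :
    Fm v m g1 ≠ Fm v m g2 := by
  by_cases hg2m : g2 = m
  · have ha := Fm_le' v m g1 (by omega)
    have hb : Fm v m g2 = m + 1 := by rw [Fm, if_pos hg2m]
    omega
  · have hg2 : g2 < m := by omega
    have hB := eA_split v m g1 g2 (le_of_lt h12) (by omega)
    set B := ∑ q ∈ Finset.Ico g1 g2, if v (q+1) < v q then 1 else 0 with hBdef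
    have hBcard : B ≤ g2 - g1 := by
      calc B ≤ ∑ q ∈ Finset.Ico g1 g2, 1 := by
            apply Finset.sum_le_sum; intro q _; split <;> omega
        _ = g2 - g1 := by rw [Finset.sum_const, smul_eq_mul, mul_one, Nat.card_Ico]
    have e1 : Fm v m g1 = if 1 ≤ g1 ∧ v g1 < v (g1 - 1) then 1 + eA v m g1
        else g1 + 1 + eA v m g1 := by
      rw [Fm, if_neg (show ¬ g1 = m by omega)]
    have e2 : Fm v m g2 = if 1 ≤ g2 ∧ v g2 < v (g2 - 1) then 1 + eA v m g2
        else g2 + 1 + eA v m g2 := by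
      rw [Fm, if_neg (show ¬ g2 = m by omega)]
    by_cases d2 : v g2 < v (g2 - 1)
    · have e2' : Fm v m g2 = 1 + eA v m g2 := by
        rw [e2, if_pos (show 1 ≤ g2 ∧ v g2 < v (g2 - 1) from ⟨by omega, d2⟩)]
      have hBge : 1 ≤ B := by
        rw [hBdef]
        calc (1:ℕ) = if v (g2 - 1 + 1) < v (g2 - 1) then 1 else 0 := by
              rw [show g2 - 1 + 1 = g2 by omega, if_pos d2]
          _ ≤ B := Finset.single_le_sum (f := fun q => if v (q+1) < v q then 1 else 0)
              (fun q _ => Nat.zero_le _) (Finset.mem_Ico.2 (by omega))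
      by_cases d1 : 1 ≤ g1 ∧ v g1 < v (g1 - 1)
      · have e1' : Fm v m g1 = 1 + eA v m g1 := by rw [e1, if_pos d1]
        omega
      · have e1' : Fm v m g1 = g1 + 1 + eA v m g1 := by rw [e1, if_neg d1]
        omega
    · have e2' : Fm v m g2 = g2 + 1 + eA v m g2 := by
        rw [e2, if_neg (fun hc => d2 hc.2)]
      have hBlt : B ≤ g2 - g1 - 1 := by
        have hsplit : B = (∑ q ∈ Finset.Ico g1 (g2-1), if v (q+1) < v q then 1 else 0)
            + ∑ q ∈ Finset.Ico (g2-1) g2, if v (q+1) < v q then 1 else 0 := by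
          rw [hBdef, Finset.sum_Ico_consecutive _ (by omega) (by omega)]
        have hsing : Finset.Ico (g2-1) g2 = {g2-1} := by
          ext x; simp only [Finset.mem_Ico, Finset.mem_singleton]; omega
        have e0 : (∑ q ∈ Finset.Ico (g2-1) g2, if v (q+1) < v q then 1 else 0) = 0 := by
          rw [hsing, Finset.sum_singleton, show g2 - 1 + 1 = g2 by omega, if_neg d2]
        have hc : (∑ q ∈ Finset.Ico g1 (g2-1), if v (q+1) < v q then 1 else 0) ≤ g2 - 1 - g1 := by
          calc _ ≤ ∑ q ∈ Finset.Ico g1 (g2-1), 1 := by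
                apply Finset.sum_le_sum; intro q _; split <;> omega
            _ = g2 - 1 - g1 := by rw [Finset.sum_const, smul_eq_mul, mul_one, Nat.card_Ico]
        omega
      by_cases d1 : 1 ≤ g1 ∧ v g1 < v (g1 - 1)
      · have e1' : Fm v m g1 = 1 + eA v m g1 := by rw [e1, if_pos d1]
        omega
      · have e1' : Fm v m g1 = g1 + 1 + eA v m g1 := by rw [e1, if_neg d1]
        omega

lemma sum_pow_Fm (m : ℕ) (v : ℕ → ℕ) (t : ℂ) (ht1 : t ≠ 1) (htm : t^(m+1) = 1) :
    ∑ g ∈ Finset.range (m+1), t ^ Fm v m g = 0 := by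
  have hG : ∀ g : Fin (m+1), Fm v m (g:ℕ) - 1 < m + 1 := by
    intro g
    have := Fm_le v m g (by omega)
    omega
  set G : Fin (m+1) → Fin (m+1) := fun g => ⟨Fm v m (g:ℕ) - 1, hG g⟩ with hGdef
  have hGinj : Function.Injective G := by
    intro a b hab
    have h1 := Fm_pos v m (a:ℕ)
    have h2 := Fm_pos v m (b:ℕ)
    have : Fm v m (a:ℕ) = Fm v m (b:ℕ) := by
      have := congrArg (fun x : Fin (m+1) => (x:ℕ)) hab
      simp [hGdef] at this
      omega
    by_contra hne
    have hne' : (a:ℕ) ≠ (b:ℕ) := fun h => hne (Fin.ext h)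
    rcases Nat.lt_or_ge (a:ℕ) (b:ℕ) with h | h
    · exact Fm_inj v m a b h (by omega) this
    · exact Fm_inj v m b a (by omega) (by omega) this.symm
  have hGbij : Function.Bijective G := Finite.injective_iff_bijective.1 hGinj
  rw [← Fin.sum_univ_eq_sum_range (fun g => t ^ Fm v m g) (m+1)]
  have step : ∀ g : Fin (m+1), t ^ Fm v m (g:ℕ) = t ^ ((G g : ℕ) + 1) := by
    intro g
    congr 1
    have := Fm_pos v m (g:ℕ)
    simp [hGdef]
    omega
  rw [Finset.sum_congr rfl (fun g _ => step g)]
  rw [Fintype.sum_bijective G hGbij _ (fun y : Fin (m+1) => t ^ ((y:ℕ)+1)) (fun x => rfl)]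
  have : ∑ y : Fin (m+1), t ^ ((y:ℕ)+1) = (∑ j ∈ Finset.range (m+1), t ^ j) * t := by
    rw [← Fin.sum_univ_eq_sum_range (fun j => t ^ j) (m+1), Finset.sum_mul]
    apply Finset.sum_congr rfl
    intro y _
    rw [pow_succ]
  rw [this, geom_sum_eq ht1, htm]
  simp


def insP {m : ℕ} (u : Equiv.Perm (Fin m)) (k : Fin (m+1)) : Equiv.Perm (Fin (m+1)) :=
  (finSuccEquiv' k).trans ((Equiv.optionCongr u).trans (finSuccEquiv' (Fin.last m)).symm)

lemma insP_apply_self {m : ℕ} (u : Equiv.Perm (Fin m)) (k : Fin (m+1)) :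
    insP u k k = Fin.last m := by
  simp [insP]

lemma insP_apply_succAbove {m : ℕ} (u : Equiv.Perm (Fin m)) (k : Fin (m+1)) (j : Fin m) :
    insP u k (k.succAbove j) = (u j).castSucc := by
  simp only [insP, Equiv.trans_apply, finSuccEquiv'_succAbove, Equiv.optionCongr_apply,
    Option.map_some]
  have hx : ∀ x : Fin m, (finSuccEquiv' (Fin.last m)).symm (some x) = x.castSucc := by
    intro x
    have h1 : (Fin.last m).succAbove x = x.castSucc := by rw [Fin.succAbove_last]
    rw [← h1, ← finSuccEquiv'_succAbove (Fin.last m) x, Equiv.symm_apply_apply]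
  rw [hx]

lemma insP_inv_last {m : ℕ} (u : Equiv.Perm (Fin m)) (k : Fin (m+1)) :
    (insP u k)⁻¹ (Fin.last m) = k := by
  rw [← insP_apply_self u k, Equiv.Perm.inv_def, Equiv.symm_apply_apply]

lemma insP_inv_castSucc {m : ℕ} (u : Equiv.Perm (Fin m)) (k : Fin (m+1)) (x : Fin m) :
    (insP u k)⁻¹ x.castSucc = k.succAbove (u⁻¹ x) := by
  have := insP_apply_succAbove u k (u⁻¹ x)
  rw [show u (u⁻¹ x) = x from u.apply_symm_apply x] at this
  rw [← this, Equiv.Perm.inv_def, Equiv.symm_apply_apply]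

lemma insP_bijective (m : ℕ) :
    Function.Bijective (fun uk : Equiv.Perm (Fin m) × Fin (m+1) => insP uk.1 uk.2) := by
  rw [Fintype.bijective_iff_injective_and_card]
  constructor
  · rintro ⟨u, k⟩ ⟨u', k'⟩ hw
    simp only at hw
    have hk : k = k' := by
      rw [← insP_inv_last u k, ← insP_inv_last u' k', hw]
    subst hk
    have hu : ∀ j : Fin m, u j = u' j := by
      intro j
      have h1 := insP_apply_succAbove u k j
      have h2 := insP_apply_succAbove u' k j
      rw [hw] at h1
      rw [h1] at h2
      exact (Fin.castSucc_injective m h2.symm).symm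
    have : u = u' := Equiv.ext hu
    simp [this]
  · simp [Fintype.card_perm, Nat.factorial_succ, Fintype.card_prod, mul_comm]

open Finset Equiv

lemma succAbove_val {m : ℕ} (k : Fin (m+1)) (j : Fin m) :
    ((k.succAbove j : Fin (m+1)) : ℕ) = if (j:ℕ) < (k:ℕ) then (j:ℕ) else (j:ℕ)+1 := by
  rcases lt_or_ge (j.castSucc) k with h | h
  · rw [Fin.succAbove_of_castSucc_lt _ _ h]; simp [Fin.lt_def] at h; simp [h]
  · rw [Fin.succAbove_of_le_castSucc _ _ h]; simp [Fin.le_def] at h; rw [if_neg (by omega)]; simp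
section
open Finset Equiv

lemma pword_lt {m : ℕ} (u : Equiv.Perm (Fin m)) : ∀ p < m, pword u p < m := by
  intro p hp
  rw [pword, dif_pos hp]
  exact (u ⟨p, hp⟩).isLt

lemma pword_insP {m : ℕ} (u : Equiv.Perm (Fin m)) (k : Fin (m+1)) :
    ∀ p < m + 1, pword (insP u k) p = wIns (k:ℕ) m (pword u) p := by
  intro p hp
  set P : Fin (m+1) := ⟨p, hp⟩ with hP
  have hval : pword (insP u k) p = (insP u k P : ℕ) := by rw [pword, dif_pos hp]
  by_cases hpk : P = k
  · have hkp : (k:ℕ) = p := by rw [← hpk]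
    rw [hval, hpk, insP_apply_self]
    rw [wIns]
    simp only [← hkp, lt_self_iff_false, if_false, if_pos rfl]
    rfl
  · obtain ⟨j, hj⟩ := Fin.exists_succAbove_eq hpk
    have hv2 : (insP u k P : ℕ) = (u j : ℕ) := by
      rw [← hj, insP_apply_succAbove]; simp
    have hjval := succAbove_val k j
    rw [hj] at hjval
    by_cases hjk : (j:ℕ) < (k:ℕ)
    · rw [if_pos hjk] at hjval
      have hpj : p = (j:ℕ) := by rw [← hjval]
      rw [hval, hv2, wIns]
      rw [if_pos (show p < (k:ℕ) by omega), pword, dif_pos (by omega : p < m)]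
      congr 1
      apply Fin.ext
      simp [hpj]
    · rw [if_neg hjk] at hjval
      have hpj : p = (j:ℕ) + 1 := by rw [← hjval]
      rw [hval, hv2, wIns]
      rw [if_neg (show ¬ p < (k:ℕ) by omega), if_neg (show ¬ p = (k:ℕ) by omega),
        pword, dif_pos (by omega : p - 1 < m)]
      congr 1
      apply Fin.ext
      simp [hpj]

lemma permMaj_insP_eq {m : ℕ} (u : Equiv.Perm (Fin m)) (k : Fin (m+1)) :
    permMaj (insP u k) = wMaj (m+1) (wIns (k:ℕ) m (pword u)) := by
  rw [permMaj_eq_wMaj]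
  exact wMaj_congr (pword_insP u k)

lemma pow_permMaj_insP {m : ℕ} (t : ℂ) (ht : t^(m+1) = 1)
    (u : Equiv.Perm (Fin m)) (k : Fin (m+1)) :
    t ^ permMaj (insP u k) = t ^ permMaj u * t ^ Fm (pword u) m (k:ℕ) := by
  have base := permMaj_insP_eq u k
  have hv := pword_lt u
  have hu : permMaj u = wMaj m (pword u) := permMaj_eq_wMaj u
  by_cases hk : (k:ℕ) < m
  · have hw := wMaj_wIns m m (k:ℕ) (pword u) hk hv
    by_cases d : 1 ≤ (k:ℕ) ∧ pword u (k:ℕ) < pword u ((k:ℕ)-1)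
    · have hF : Fm (pword u) m (k:ℕ) = 1 + eA (pword u) m (k:ℕ) := by
        rw [Fm, if_neg (by omega), if_pos d]
      rw [if_pos d] at hw
      have : permMaj (insP u k) = permMaj u + Fm (pword u) m (k:ℕ) := by
        rw [base, hu, hF]; omega
      rw [this, pow_add]
    · have hF : Fm (pword u) m (k:ℕ) = (k:ℕ) + 1 + eA (pword u) m (k:ℕ) := by
        rw [Fm, if_neg (by omega), if_neg d]
      rw [if_neg d] at hw
      have : permMaj (insP u k) = permMaj u + Fm (pword u) m (k:ℕ) := by
        rw [base, hu, hF]; omega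
      rw [this, pow_add]
  · have hk' : (k:ℕ) = m := by have := k.isLt; omega
    have hF : Fm (pword u) m (k:ℕ) = m + 1 := by rw [Fm, if_pos hk']
    rw [hF, ht, mul_one, base, hk', wMaj_wIns_last m m (pword u) hv, ← hu]

lemma pow_permMaj_insP_inv {m : ℕ} (hm : 1 ≤ m) (q : ℂ) (hq : q^m = 1)
    (u : Equiv.Perm (Fin m)) (k : Fin (m+1)) :
    q ^ permMaj (insP u k)⁻¹ = q ^ permMaj u⁻¹ := by
  set W := (insP u k)⁻¹ with hW
  have hcast : ∀ p (hp : p < m), (⟨p, by omega⟩ : Fin (m+1)) = Fin.castSucc ⟨p, hp⟩ := by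
    intro p hp; apply Fin.ext; simp
  have hWval : ∀ (p : ℕ) (hp : p < m), pword W p = ((k.succAbove (u⁻¹ ⟨p, hp⟩) : Fin (m+1)) : ℕ) := by
    intro p hp
    rw [pword, dif_pos (by omega : p < m + 1), hW, hcast p hp, insP_inv_castSucc]
  -- descents below m-1 agree with those of u⁻¹
  have hdesc : ∀ p ∈ Finset.range (m-1),
      (if pword W (p+1) < pword W p then p+1 else 0)
      = (if pword u⁻¹ (p+1) < pword u⁻¹ p then p+1 else 0) := by
    intro p hp
    simp only [Finset.mem_range] at hp
    have hiff : (pword W (p+1) < pword W p) ↔ (pword u⁻¹ (p+1) < pword u⁻¹ p) := by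
      rw [hWval p (by omega), hWval (p+1) (by omega)]
      rw [pword, pword, dif_pos (by omega : p < m), dif_pos (by omega : p + 1 < m)]
      rw [← Fin.lt_iff_val_lt_val, ← Fin.lt_iff_val_lt_val, Fin.succAbove_lt_succAbove_iff]
    exact if_congr hiff rfl rfl
  have split1 : wMaj (m+1) (pword W) = (∑ p ∈ Finset.range (m-1),
      (if pword W (p+1) < pword W p then p+1 else 0))
      + (if pword W (m-1+1) < pword W (m-1) then m-1+1 else 0) := by
    rw [wMaj, Nat.add_sub_cancel]
    have hr : Finset.range m = Finset.range ((m-1)+1) := by congr 1; omega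
    rw [hr, Finset.sum_range_succ]
  have hlast : ∃ d, (if pword W (m-1+1) < pword W (m-1) then m-1+1 else 0) = m * d := by
    by_cases h : pword W (m-1+1) < pword W (m-1)
    · refine ⟨1, ?_⟩
      rw [if_pos h, mul_one]
      omega
    · refine ⟨0, ?_⟩
      rw [if_neg h, mul_zero]
  obtain ⟨d, hd⟩ := hlast
  have : permMaj W = permMaj u⁻¹ + m * d := by
    rw [permMaj_eq_wMaj, permMaj_eq_wMaj, split1, Finset.sum_congr rfl hdesc, hd, wMaj]
  rw [this, pow_add, pow_mul, hq, one_pow, mul_one]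

end
section
open Finset Equiv

lemma sum_pow_maj_eq_zero (n : ℕ) (hn : 1 ≤ n) (q : ℂ) (hq1 : q ≠ 1) (hq : q^n = 1) :
    ∑ v : Equiv.Perm (Fin n), q ^ permMaj v = 0 := by
  obtain ⟨m, rfl⟩ : ∃ m, n = m + 1 := ⟨n - 1, by omega⟩
  rw [← Fintype.sum_bijective _ (insP_bijective m)
    (fun uk : Equiv.Perm (Fin m) × Fin (m+1) => q ^ permMaj (insP uk.1 uk.2))
    (fun w => q ^ permMaj w) (fun _ => rfl)]
  rw [Fintype.sum_prod_type]
  have hin : ∀ u : Equiv.Perm (Fin m), (∑ k : Fin (m+1), q ^ permMaj (insP u k)) = 0 := by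
    intro u
    calc (∑ k : Fin (m+1), q ^ permMaj (insP u k))
        = ∑ k : Fin (m+1), q ^ permMaj u * q ^ Fm (pword u) m (k:ℕ) := by
          apply Finset.sum_congr rfl
          intro k _
          exact pow_permMaj_insP q hq u k
      _ = q ^ permMaj u * ∑ k : Fin (m+1), q ^ Fm (pword u) m (k:ℕ) := by
          rw [Finset.mul_sum]
      _ = q ^ permMaj u * ∑ g ∈ Finset.range (m+1), q ^ Fm (pword u) m g := by
          rw [Fin.sum_univ_eq_sum_range (fun g => q ^ Fm (pword u) m g) (m+1)]
      _ = 0 := by rw [sum_pow_Fm m (pword u) q hq1 hq, mul_zero]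
  rw [Finset.sum_congr rfl (fun u _ => hin u), Finset.sum_const, smul_zero]

lemma Sval_vanish (m : ℕ) (hm : 1 ≤ m) (t q : ℂ) (ht : t^(m+1) = 1) (hq : q^m = 1)
    (hne : ¬(t = 1 ∧ q = 1)) : Sval (m+1) t q = 0 := by
  by_cases ht1 : t = 1
  · subst ht1
    have hq1 : q ≠ 1 := fun h => hne ⟨rfl, h⟩
    have e1 : Sval (m+1) 1 q = ∑ w : Equiv.Perm (Fin (m+1)), q ^ permMaj w⁻¹ := by
      rw [Sval]
      apply Finset.sum_congr rfl
      intro w _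
      rw [one_pow, one_mul]
    rw [e1, ← Fintype.sum_bijective _ (insP_bijective m)
      (fun uk : Equiv.Perm (Fin m) × Fin (m+1) => q ^ permMaj (insP uk.1 uk.2)⁻¹)
      (fun w => q ^ permMaj w⁻¹) (fun _ => rfl)]
    have e2 : ∀ uk : Equiv.Perm (Fin m) × Fin (m+1),
        q ^ permMaj (insP uk.1 uk.2)⁻¹ = q ^ permMaj uk.1⁻¹ :=
      fun ⟨u, k⟩ => pow_permMaj_insP_inv hm q hq u k
    rw [Finset.sum_congr rfl (fun uk _ => e2 uk), Fintype.sum_prod_type]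
    have e3 : ∀ u : Equiv.Perm (Fin m), (∑ _k : Fin (m+1), q ^ permMaj u⁻¹)
        = (m+1 : ℂ) * q ^ permMaj u⁻¹ := by
      intro u
      rw [Finset.sum_const, Finset.card_univ, Fintype.card_fin, nsmul_eq_mul]
      push_cast
      ring
    rw [Finset.sum_congr rfl (fun u _ => e3 u), ← Finset.mul_sum]
    have e4 : ∑ u : Equiv.Perm (Fin m), q ^ permMaj u⁻¹
        = ∑ u : Equiv.Perm (Fin m), q ^ permMaj u :=
      Equiv.sum_comp (Equiv.inv (Equiv.Perm (Fin m))) (fun u => q ^ permMaj u)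
    rw [e4, sum_pow_maj_eq_zero m hm q hq1 hq, mul_zero]
  · rw [Sval, ← Fintype.sum_bijective _ (insP_bijective m)
      (fun uk : Equiv.Perm (Fin m) × Fin (m+1) =>
        t ^ permMaj (insP uk.1 uk.2) * q ^ permMaj (insP uk.1 uk.2)⁻¹)
      (fun w => t ^ permMaj w * q ^ permMaj w⁻¹) (fun _ => rfl)]
    rw [Fintype.sum_prod_type]
    have hin : ∀ u : Equiv.Perm (Fin m),
        (∑ k : Fin (m+1), t ^ permMaj (insP u k) * q ^ permMaj (insP u k)⁻¹) = 0 := by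
      intro u
      calc (∑ k : Fin (m+1), t ^ permMaj (insP u k) * q ^ permMaj (insP u k)⁻¹)
          = ∑ k : Fin (m+1), (t ^ permMaj u * q ^ permMaj u⁻¹) * t ^ Fm (pword u) m (k:ℕ) := by
            apply Finset.sum_congr rfl
            intro k _
            rw [pow_permMaj_insP t ht u k, pow_permMaj_insP_inv hm q hq u k]
            ring
        _ = (t ^ permMaj u * q ^ permMaj u⁻¹) * ∑ g ∈ Finset.range (m+1), t ^ Fm (pword u) m g := by
            rw [Fin.sum_univ_eq_sum_range
              (fun g => t ^ permMaj u * q ^ permMaj u⁻¹ * t ^ Fm (pword u) m g) (m+1),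
              ← Finset.mul_sum]
        _ = 0 := by rw [sum_pow_Fm m (pword u) t ht1 ht, mul_zero]
    rw [Finset.sum_congr rfl (fun u _ => hin u), Finset.sum_const, smul_zero]

end
section
open Equiv

variable {n : ℕ}

lemma zpow_eq_one_of_fix (c : Equiv.Perm (Fin n))
    (hc : ∀ x y : Fin n, ∃ m : ℕ, (c ^ m) x = y) (i : ℤ) (x : Fin n)
    (hx : (c ^ i) x = x) : c ^ i = 1 := by
  apply Equiv.ext
  intro y
  rw [Equiv.Perm.one_apply]
  obtain ⟨m, hm⟩ := hc x y
  have comm : c ^ i * c ^ (m:ℕ) = c ^ (m:ℕ) * c ^ i := by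
    rw [← zpow_natCast c m, ← zpow_add, ← zpow_add, add_comm]
  calc (c ^ i) y = (c ^ i) ((c ^ (m:ℕ)) x) := by rw [hm]
    _ = (c ^ i * c ^ (m:ℕ)) x := by rw [Equiv.Perm.mul_apply]
    _ = (c ^ (m:ℕ) * c ^ i) x := by rw [comm]
    _ = (c ^ (m:ℕ)) ((c ^ i) x) := by rw [Equiv.Perm.mul_apply]
    _ = y := by rw [hx, hm]

lemma pow_eq_one_of_fix (c : Equiv.Perm (Fin n))
    (hc : ∀ x y : Fin n, ∃ m : ℕ, (c ^ m) x = y) (k : ℕ) (x : Fin n)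
    (hx : (c ^ k) x = x) : c ^ k = 1 := by
  have h1 : (c ^ (k:ℤ)) x = x := by rw [zpow_natCast]; exact hx
  have h2 := zpow_eq_one_of_fix c hc (k:ℤ) x h1
  rw [zpow_natCast] at h2
  exact h2

lemma orderOf_transitive (hn : 1 ≤ n) (c : Equiv.Perm (Fin n))
    (hc : ∀ x y : Fin n, ∃ m : ℕ, (c ^ m) x = y) : orderOf c = n := by
  set x₀ : Fin n := ⟨0, by omega⟩ with hx₀
  have hdpos : 0 < orderOf c := orderOf_pos c
  set f : Fin (orderOf c) → Fin n := fun m => (c ^ (m:ℕ)) x₀ with hf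
  have key : ∀ a b : Fin (orderOf c), a ≤ b → f a = f b → a = b := by
    intro a b hab hfab
    have hfab' : (c ^ (a:ℕ)) x₀ = (c ^ (b:ℕ)) x₀ := hfab
    have h1 : (c ^ (b:ℕ)) x₀ = (c ^ ((a:ℕ) + ((b:ℕ) - (a:ℕ)))) x₀ := by
      congr 2; omega
    rw [pow_add, Equiv.Perm.mul_apply] at h1
    have h2 : (c ^ (a:ℕ)) ((c ^ ((b:ℕ) - (a:ℕ))) x₀) = (c ^ (a:ℕ)) x₀ := by
      rw [← h1, ← hfab']
    have h3 : (c ^ ((b:ℕ) - (a:ℕ))) x₀ = x₀ := (Equiv.injective _) h2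
    have h4 := pow_eq_one_of_fix c hc ((b:ℕ) - (a:ℕ)) x₀ h3
    have h5 := orderOf_dvd_of_pow_eq_one h4
    have h6 : (b:ℕ) - (a:ℕ) < orderOf c := by have := b.isLt; omega
    have h7 : (b:ℕ) - (a:ℕ) = 0 := Nat.eq_zero_of_dvd_of_lt h5 h6
    apply Fin.ext
    have : (a:ℕ) ≤ (b:ℕ) := hab
    omega
  have hinj : Function.Injective f := by
    intro a b hfab
    rcases le_total a b with h | h
    · exact key a b h hfab
    · exact (key b a h hfab.symm).symm
  have hsurj : Function.Surjective f := by
    intro y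
    obtain ⟨m, hm⟩ := hc x₀ y
    refine ⟨⟨m % orderOf c, Nat.mod_lt _ hdpos⟩, ?_⟩
    show (c ^ (m % orderOf c)) x₀ = y
    rw [pow_mod_orderOf]
    exact hm
  have hcard := Fintype.card_of_bijective ⟨hinj, hsurj⟩
  simpa using hcard

lemma zpow_eq_one_of_fix' (c' : Equiv.Perm (Fin n)) (p : Fin n) (hp : c' p = p)
    (htr : ∀ x y : Fin n, x ≠ p → y ≠ p → ∃ m : ℕ, (c' ^ m) x = y)
    (i : ℤ) (x : Fin n) (hxp : x ≠ p) (hx : (c' ^ i) x = x) : c' ^ i = 1 := by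
  apply Equiv.ext
  intro y
  rw [Equiv.Perm.one_apply]
  by_cases hyp : y = p
  · subst hyp
    exact Equiv.Perm.zpow_apply_eq_self_of_apply_eq_self hp i
  · obtain ⟨m, hm⟩ := htr x y hxp hyp
    have comm : c' ^ i * c' ^ (m:ℕ) = c' ^ (m:ℕ) * c' ^ i := by
      rw [← zpow_natCast c' m, ← zpow_add, ← zpow_add, add_comm]
    calc (c' ^ i) y = (c' ^ i) ((c' ^ (m:ℕ)) x) := by rw [hm]
      _ = (c' ^ i * c' ^ (m:ℕ)) x := by rw [Equiv.Perm.mul_apply]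
      _ = (c' ^ (m:ℕ) * c' ^ i) x := by rw [comm]
      _ = (c' ^ (m:ℕ)) ((c' ^ i) x) := by rw [Equiv.Perm.mul_apply]
      _ = y := by rw [hx, hm]

lemma pow_eq_one_of_fix' (c' : Equiv.Perm (Fin n)) (p : Fin n) (hp : c' p = p)
    (htr : ∀ x y : Fin n, x ≠ p → y ≠ p → ∃ m : ℕ, (c' ^ m) x = y)
    (k : ℕ) (x : Fin n) (hxp : x ≠ p) (hx : (c' ^ k) x = x) : c' ^ k = 1 := by
  have h1 : (c' ^ (k:ℤ)) x = x := by rw [zpow_natCast]; exact hx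
  have h2 := zpow_eq_one_of_fix' c' p hp htr (k:ℤ) x hxp h1
  rw [zpow_natCast] at h2
  exact h2

lemma orderOf_transitive' (hn : 2 ≤ n) (c' : Equiv.Perm (Fin n)) (p : Fin n) (hp : c' p = p)
    (htr : ∀ x y : Fin n, x ≠ p → y ≠ p → ∃ m : ℕ, (c' ^ m) x = y) :
    orderOf c' = n - 1 := by
  have hex : ∃ x : Fin n, x ≠ p := by
    by_cases h0 : p = ⟨0, by omega⟩
    · exact ⟨⟨1, by omega⟩, by rw [h0]; intro h; simpa using congrArg Fin.val h⟩
    · exact ⟨⟨0, by omega⟩, fun h => h0 (h ▸ rfl)⟩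
  obtain ⟨x₁, hx₁⟩ := hex
  have hdpos : 0 < orderOf c' := orderOf_pos c'
  have hppow : ∀ k : ℕ, (c' ^ k) p = p := by
    intro k
    have := Equiv.Perm.zpow_apply_eq_self_of_apply_eq_self hp (k:ℤ)
    rw [zpow_natCast] at this
    exact this
  have hne : ∀ k : ℕ, (c' ^ k) x₁ ≠ p := by
    intro k h
    exact hx₁ ((Equiv.injective (c' ^ k)) (h.trans (hppow k).symm))
  set f : Fin (orderOf c') → {y : Fin n // y ≠ p} := fun m => ⟨(c' ^ (m:ℕ)) x₁, hne _⟩ with hf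
  have key : ∀ a b : Fin (orderOf c'), a ≤ b → f a = f b → a = b := by
    intro a b hab hfab
    have hfab' : (c' ^ (a:ℕ)) x₁ = (c' ^ (b:ℕ)) x₁ := congrArg Subtype.val hfab
    have h1 : (c' ^ (b:ℕ)) x₁ = (c' ^ ((a:ℕ) + ((b:ℕ) - (a:ℕ)))) x₁ := by
      congr 2; omega
    rw [pow_add, Equiv.Perm.mul_apply] at h1
    have h2 : (c' ^ (a:ℕ)) ((c' ^ ((b:ℕ) - (a:ℕ))) x₁) = (c' ^ (a:ℕ)) x₁ := by
      rw [← h1, ← hfab']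
    have h3 : (c' ^ ((b:ℕ) - (a:ℕ))) x₁ = x₁ := (Equiv.injective _) h2
    have h4 := pow_eq_one_of_fix' c' p hp htr ((b:ℕ) - (a:ℕ)) x₁ hx₁ h3
    have h5 := orderOf_dvd_of_pow_eq_one h4
    have h6 : (b:ℕ) - (a:ℕ) < orderOf c' := by have := b.isLt; omega
    have h7 : (b:ℕ) - (a:ℕ) = 0 := Nat.eq_zero_of_dvd_of_lt h5 h6
    apply Fin.ext
    have : (a:ℕ) ≤ (b:ℕ) := hab
    omega
  have hinj : Function.Injective f := by
    intro a b hfab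
    rcases le_total a b with h | h
    · exact key a b h hfab
    · exact (key b a h hfab.symm).symm
  have hsurj : Function.Surjective f := by
    rintro ⟨y, hy⟩
    obtain ⟨m, hm⟩ := htr x₁ y hx₁ hy
    refine ⟨⟨m % orderOf c', Nat.mod_lt _ hdpos⟩, ?_⟩
    apply Subtype.ext
    show (c' ^ (m % orderOf c')) x₁ = y
    rw [pow_mod_orderOf]
    exact hm
  have hcard := Fintype.card_of_bijective ⟨hinj, hsurj⟩
  rw [Fintype.card_fin] at hcard
  rw [hcard, Fintype.card_subtype_compl, Fintype.card_subtype_eq, Fintype.card_fin]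

end
theorem stmt9 (n : ℕ) (hn : 2 ≤ n) (c c' : Equiv.Perm (Fin n))
    (hc : ∀ x y : Fin n, ∃ m : ℕ, (c ^ m) x = y)
    (hc' : ∃ p : Fin n, c' p = p ∧
      ∀ x y : Fin n, x ≠ p → y ≠ p → ∃ m : ℕ, (c' ^ m) x = y)
    (ω ω' : ℂ) (hω : IsPrimitiveRoot ω n) (hω' : IsPrimitiveRoot ω' (n - 1))
    (i j : ℤ) :
    Sval n (ω ^ (-i)) (ω' ^ (-j)) =
      (Nat.card {w : Equiv.Perm (Fin n) // c ^ i * w = w * c' ^ j} : ℂ) := by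
  obtain ⟨p, hp, htr⟩ := hc'
  have hordc : orderOf c = n := orderOf_transitive (by omega) c hc
  have hordc' : orderOf c' = n - 1 := orderOf_transitive' hn c' p hp htr
  by_cases hdvd : ((n:ℤ) ∣ i) ∧ (((n-1:ℕ):ℤ) ∣ j)
  · have hci : c ^ i = 1 := by
      rw [← orderOf_dvd_iff_zpow_eq_one, hordc]; exact hdvd.1
    have hcj : c' ^ j = 1 := by
      rw [← orderOf_dvd_iff_zpow_eq_one, hordc']; exact hdvd.2
    have ht1 : ω ^ (-i) = 1 := (hω.zpow_eq_one_iff_dvd (-i)).2 (dvd_neg.2 hdvd.1)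
    have hq1 : ω' ^ (-j) = 1 := (hω'.zpow_eq_one_iff_dvd (-j)).2 (dvd_neg.2 hdvd.2)
    have hall : ∀ w : Equiv.Perm (Fin n), c ^ i * w = w * c' ^ j := by
      intro w; rw [hci, hcj, one_mul, mul_one]
    have hcard : Nat.card {w : Equiv.Perm (Fin n) // c ^ i * w = w * c' ^ j}
        = Fintype.card (Equiv.Perm (Fin n)) := by
      rw [Nat.card_congr (Equiv.subtypeUnivEquiv hall), Nat.card_eq_fintype_card]
    rw [ht1, hq1, hcard, Sval]
    simp only [one_pow, one_mul, Finset.sum_const, Finset.card_univ, nsmul_eq_mul, mul_one]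
  · have hempty : ∀ w : Equiv.Perm (Fin n), ¬ (c ^ i * w = w * c' ^ j) := by
      intro w hw
      have h1 : (c ^ i) (w p) = w ((c' ^ j) p) := by
        rw [← Equiv.Perm.mul_apply, hw, Equiv.Perm.mul_apply]
      rw [Equiv.Perm.zpow_apply_eq_self_of_apply_eq_self hp j] at h1
      have hci : c ^ i = 1 := zpow_eq_one_of_fix c hc i (w p) h1
      have hcj : c' ^ j = 1 := by
        have h2 : w * c' ^ j = w * 1 := by rw [← hw, hci, one_mul, mul_one]
        exact mul_left_cancel h2
      apply hdvd
      constructor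
      · rw [← hordc]; exact orderOf_dvd_iff_zpow_eq_one.2 hci
      · rw [← hordc']; exact orderOf_dvd_iff_zpow_eq_one.2 hcj
    have hzero : Nat.card {w : Equiv.Perm (Fin n) // c ^ i * w = w * c' ^ j} = 0 := by
      rw [Nat.card_eq_zero]
      exact Or.inl ⟨fun ⟨w, hw⟩ => hempty w hw⟩
    rw [hzero]
    have htn : (ω ^ (-i)) ^ n = 1 := by
      rw [← zpow_natCast, ← zpow_mul, mul_comm, zpow_mul, zpow_natCast, hω.pow_eq_one, one_zpow]
    have hqn : (ω' ^ (-j)) ^ (n-1) = 1 := by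
      rw [← zpow_natCast, ← zpow_mul, mul_comm, zpow_mul, zpow_natCast, hω'.pow_eq_one, one_zpow]
    have hne2 : ¬(ω ^ (-i) = 1 ∧ ω' ^ (-j) = 1) := by
      rintro ⟨h1, h2⟩
      apply hdvd
      exact ⟨dvd_neg.1 ((hω.zpow_eq_one_iff_dvd (-i)).1 h1),
        dvd_neg.1 ((hω'.zpow_eq_one_iff_dvd (-j)).1 h2)⟩
    obtain ⟨m, rfl⟩ : ∃ m, n = m + 1 := ⟨n-1, by omega⟩
    have hv := Sval_vanish m (by omega) (ω ^ (-i)) (ω' ^ (-j)) htn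
      (by simpa using hqn) hne2
    rw [hv]
    simp
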